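/- Let f(t) and g(t) be real polynomials with positive leading coefficients and only nonpositive real zeros. If the Hadamard product f*g is nonzero, then f*g has only nonpositive real zeros. -/

import Mathlib

open Polynomial

/-- The Hadamard (coefficientwise) product of two real polynomials. -/
noncomputable def hadamard (f g : Polynomial ℝ) : Polynomial ℝ :=
  ∑ i ∈ Finset.range (min f.natDegree g.natDegree + 1),
    Polynomial.C (f.coeff i * g.coeff i) * Polynomial.X ^ i

/-- A real polynomial has only nonpositive real zeros: every complex root is a
real number ≤ 0. -/
def OnlyNonposZeros (f : Polynomial ℝ) : Prop :=
  ∀ z : ℂ, (f.map (algebraMap ℝ ℂ)).IsRoot z → ∃ x : ℝ, x ≤ 0 ∧ z = (x : ℂ)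

namespace MaloAux
open Complex


/-- Core computation: the "logarithmic derivative direction" trick.  For `w` outside the
open half-plane `H = {ρ | 0 < (c*ρ).re}` and all elements of `R` inside it, the product
`∏ (X - C ρ)` does not vanish at `w`, and a certain real part is (strictly, if `R ≠ 0`)
negative; in particular the derivative does not vanish at `w` either. -/
lemma gl_core (c w : ℂ) (hw : (c * w).re ≤ 0) (R : Multiset ℂ)
    (hR : ∀ ρ ∈ R, 0 < (c * ρ).re) :
    eval w ((R.map fun ρ => X - C ρ)).prod ≠ 0 ∧
    ((starRingEnd ℂ) c * eval w (derivative ((R.map fun ρ => X - C ρ)).prod) *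
      (starRingEnd ℂ) (eval w ((R.map fun ρ => X - C ρ)).prod)).re ≤ 0 ∧
    (R ≠ 0 →
      ((starRingEnd ℂ) c * eval w (derivative ((R.map fun ρ => X - C ρ)).prod) *
        (starRingEnd ℂ) (eval w ((R.map fun ρ => X - C ρ)).prod)).re < 0) := by
  induction R using Multiset.induction_on with
  | empty => simp
  | cons ρ R ih =>
    have hρ : 0 < (c * ρ).re := hR ρ (Multiset.mem_cons_self ρ R)
    obtain ⟨h1, h2, _⟩ := ih (fun x hx => hR x (Multiset.mem_cons_of_mem hx))
    set p : ℂ[X] := ((R.map fun ρ => X - C ρ)).prod with hpdef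
    set q : ℂ := eval w p with hq
    set dq : ℂ := eval w (derivative p) with hdq
    have hφre : (c * (w - ρ)).re < 0 := by
      rw [mul_sub, Complex.sub_re]; linarith
    have hφ : w - ρ ≠ 0 := by
      intro h0; rw [h0, mul_zero] at hφre; simp at hφre
    have hprod : (((ρ ::ₘ R).map fun ρ => X - C ρ)).prod = (X - C ρ) * p := by
      rw [Multiset.map_cons, Multiset.prod_cons]
    have hevP : eval w ((((ρ ::ₘ R).map fun ρ => X - C ρ)).prod) = (w - ρ) * q := by
      rw [hprod, eval_mul, eval_sub, eval_X, eval_C]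
    have hevD : eval w (derivative ((((ρ ::ₘ R).map fun ρ => X - C ρ)).prod))
        = (w - ρ) * dq + q := by
      rw [hprod, derivative_mul]
      simp only [derivative_sub, derivative_X, derivative_C, sub_zero, eval_add, eval_mul,
        eval_sub, eval_X, eval_C, eval_one, one_mul]
      ring
    have key : (starRingEnd ℂ) c * ((w - ρ) * dq + q) * (starRingEnd ℂ) ((w - ρ) * q)
        = (normSq (w - ρ) : ℂ) * ((starRingEnd ℂ) c * dq * (starRingEnd ℂ) q)
          + (normSq q : ℂ) * ((starRingEnd ℂ) (c * (w - ρ))) := by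
      rw [map_mul, map_mul, ← Complex.mul_conj (w - ρ), ← Complex.mul_conj q]
      ring
    have hre : ((starRingEnd ℂ) c * ((w - ρ) * dq + q) * (starRingEnd ℂ) ((w - ρ) * q)).re
        = normSq (w - ρ) * ((starRingEnd ℂ) c * dq * (starRingEnd ℂ) q).re
          + normSq q * (c * (w - ρ)).re := by
      rw [key, Complex.add_re, re_ofReal_mul, re_ofReal_mul, Complex.conj_re]
    have hq0 : 0 < normSq q := normSq_pos.mpr h1
    have hφ0 : 0 < normSq (w - ρ) := normSq_pos.mpr hφ
    have hlt : ((starRingEnd ℂ) c * ((w - ρ) * dq + q) * (starRingEnd ℂ) ((w - ρ) * q)).re < 0 := by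
      rw [hre]
      have t1 : normSq (w - ρ) * ((starRingEnd ℂ) c * dq * (starRingEnd ℂ) q).re ≤ 0 :=
        mul_nonpos_of_nonneg_of_nonpos (le_of_lt hφ0) h2
      have t2 : normSq q * (c * (w - ρ)).re < 0 := mul_neg_of_pos_of_neg hq0 hφre
      linarith
    refine ⟨?_, ?_, fun _ => ?_⟩
    · rw [hevP]; exact mul_ne_zero hφ h1
    · rw [hevP, hevD]; exact le_of_lt hlt
    · rw [hevP, hevD]; exact hlt

/-- One Gauss–Lucas step for open half-planes of the form `{w | 0 < (c*w).re}`. -/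
lemma gl_step (c : ℂ) (p : ℂ[X]) (hp : 0 < p.natDegree)
    (hroots : ∀ w, p.IsRoot w → 0 < (c * w).re) :
    ∀ w, (derivative p).IsRoot w → 0 < (c * w).re := by
  intro w hw
  by_contra hcw
  push_neg at hcw
  have hp0 : p ≠ 0 := fun h => by simp [h] at hp
  have hsp : p = C p.leadingCoeff * (p.roots.map fun a => X - C a).prod :=
    (IsAlgClosed.splits p).eq_prod_roots
  have hmemH : ∀ ρ ∈ p.roots, 0 < (c * ρ).re := fun ρ hρ =>
    hroots ρ (isRoot_of_mem_roots hρ)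
  obtain ⟨_, _, h3⟩ := gl_core c w hcw p.roots hmemH
  have hRne : p.roots ≠ 0 := by
    have hcard : Multiset.card p.roots = p.natDegree :=
      splits_iff_card_roots.mp (IsAlgClosed.splits p)
    intro h0; rw [h0] at hcard; simp at hcard; omega
  have hlt := h3 hRne
  have hev : eval w (derivative p) = p.leadingCoeff *
      eval w (derivative ((p.roots.map fun a => X - C a)).prod) := by
    conv_lhs => rw [hsp]
    rw [derivative_C_mul, eval_mul, eval_C]
  have hlc : p.leadingCoeff ≠ 0 := leadingCoeff_ne_zero.mpr hp0
  have hzero : eval w (derivative ((p.roots.map fun a => X - C a)).prod) = 0 := by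
    have := hw
    rw [IsRoot.def] at this
    rw [hev] at this
    exact (mul_eq_zero.mp this).resolve_left hlc
  rw [hzero] at hlt
  simp at hlt

/-- Iterated Gauss–Lucas: all iterated derivatives are nonzero (up to the degree) and
have all their roots in the half-plane. -/
lemma gl_iter (c : ℂ) (p : ℂ[X]) (hp : p ≠ 0)
    (hroots : ∀ w, p.IsRoot w → 0 < (c * w).re) :
    ∀ k, k ≤ p.natDegree →
      (derivative^[k] p ≠ 0 ∧ (derivative^[k] p).natDegree = p.natDegree - k ∧
        ∀ w, (derivative^[k] p).IsRoot w → 0 < (c * w).re) := by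
  intro k
  induction k with
  | zero =>
    intro _
    exact ⟨by simpa using hp, by simp, by simpa using hroots⟩
  | succ k ih =>
    intro hk
    obtain ⟨h1, h2, h3⟩ := ih (Nat.le_of_succ_le hk)
    have hdeg : 0 < (derivative^[k] p).natDegree := by omega
    have hq' : derivative (derivative^[k] p) ≠ 0 := by
      intro h
      have := natDegree_eq_zero_of_derivative_eq_zero h
      omega
    have hdeg' : (derivative (derivative^[k] p)).natDegree = p.natDegree - (k + 1) := by
      have hd := degree_derivative_eq (derivative^[k] p) hdeg
      have := natDegree_eq_of_degree_eq_some hd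
      omega
    refine ⟨?_, ?_, ?_⟩
    · rw [Function.iterate_succ_apply']; exact hq'
    · rw [Function.iterate_succ_apply']; exact hdeg'
    · rw [Function.iterate_succ_apply']
      exact gl_step c (derivative^[k] p) hdeg h3



/-- Coefficients of `∏ (C z * X + C r)` are `z^k` times those of `∏ (X + C r)`. -/
lemma coeff_scaled (z : ℂ) (A : Multiset ℂ) :
    ∀ k, ((A.map fun r => C z * X + C r).prod).coeff k
      = z ^ k * ((A.map fun r => X + C r).prod).coeff k := by
  induction A using Multiset.induction_on with
  | empty =>
    intro k
    cases k with
    | zero => simp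
    | succ k => simp [coeff_one]
  | cons r A ih =>
    intro k
    rw [Multiset.map_cons, Multiset.prod_cons, Multiset.map_cons, Multiset.prod_cons]
    rw [add_mul, add_mul, coeff_add, coeff_add, coeff_C_mul, coeff_C_mul, mul_assoc,
      coeff_C_mul]
    cases k with
    | zero =>
      rw [mul_coeff_zero, mul_coeff_zero, coeff_X_zero, zero_mul, zero_mul, mul_zero,
        ih 0]
      ring
    | succ k =>
      rw [coeff_X_mul, coeff_X_mul, ih k, ih (k+1)]
      ring

lemma reverse_X_add_C (s : ℂ) : (X + C s).reverse = 1 + C s * X := by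
  have h1 : (X + C s).natDegree = 1 := natDegree_X_add_C s
  have h2 : (X + C s : ℂ[X]) = C 1 * X ^ 1 + C s * X ^ 0 := by simp
  rw [reverse, h1, h2, reflect_add, reflect_C_mul_X_pow, reflect_C_mul_X_pow]
  rw [revAt_le (by norm_num), revAt_le (by norm_num)]
  simp

lemma reverse_X_pow (v : ℕ) : (X ^ v : ℂ[X]).reverse = 1 := by
  have h2 : (X ^ v : ℂ[X]) = C 1 * X ^ v := by simp
  rw [reverse, natDegree_X_pow, h2, reflect_C_mul_X_pow, revAt_le le_rfl]
  simp

lemma reverse_prod_X_add_C (B : Multiset ℂ) :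
    ((B.map fun s => X + C s).prod).reverse = (B.map fun s => 1 + C s * X).prod := by
  induction B using Multiset.induction_on with
  | empty => simp [reverse]
  | cons s B ih =>
    rw [Multiset.map_cons, Multiset.prod_cons, Multiset.map_cons, Multiset.prod_cons,
      reverse_mul_of_domain, ih, reverse_X_add_C]

lemma natDegree_prod_X_add_C (B : Multiset ℂ) :
    ((B.map fun s => X + C s).prod).natDegree = Multiset.card B := by
  rw [natDegree_multiset_prod_of_monic]
  · rw [Multiset.map_map]
    have : Multiset.map (natDegree ∘ fun s => X + C s) B = Multiset.map (fun _ => 1) B := by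
      apply Multiset.map_congr rfl
      intro s _
      simp [natDegree_X_add_C]
    rw [this, Multiset.map_const', Multiset.sum_replicate, smul_eq_mul, mul_one]
  · intro f hf
    obtain ⟨s, _, rfl⟩ := Multiset.mem_map.mp hf
    exact monic_X_add_C s

/-- The key "reversal" coefficient identity, with a monomial factor. -/
lemma coeff_rev (B : Multiset ℂ) (v j : ℕ) (hj : j ≤ v + Multiset.card B) :
    ((B.map fun s => 1 + C s * X).prod).coeff j
      = ((X ^ v * (B.map fun s => X + C s).prod)).coeff (v + Multiset.card B - j) := by
  have hmon : ((B.map fun s => X + C s).prod).Monic := by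
    exact monic_multiset_prod_of_monic _ _ (fun s _ => monic_X_add_C s)
  have hX : (X ^ v : ℂ[X]).Monic := monic_X_pow v
  have hdeg : ((X ^ v * (B.map fun s => X + C s).prod)).natDegree = v + Multiset.card B := by
    rw [hX.natDegree_mul hmon, natDegree_X_pow, natDegree_prod_X_add_C]
  have hrev : ((X ^ v * (B.map fun s => X + C s).prod)).reverse
      = (B.map fun s => 1 + C s * X).prod := by
    rw [reverse_mul_of_domain, reverse_X_pow, reverse_prod_X_add_C, one_mul]
  rw [← hrev, coeff_reverse, hdeg, revAt_le hj]



lemma hadamard_comm (f g : Polynomial ℝ) : hadamard f g = hadamard g f := by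
  unfold hadamard
  rw [min_comm]
  exact Finset.sum_congr rfl fun i _ => by rw [mul_comm (f.coeff i)]

/-- Factor a real polynomial with only nonpositive zeros over `ℂ` as
`lc * X^u * ∏ (X + w)` with the `w`'s positive reals. -/
lemma exists_mult (f : Polynomial ℝ) (hf0 : f ≠ 0) (hf : OnlyNonposZeros f) :
    ∃ (A : Multiset ℂ) (u : ℕ), (∀ w ∈ A, ∃ r : ℝ, 0 < r ∧ w = (r : ℂ)) ∧
      Multiset.card A + u = f.natDegree ∧
      f.map (algebraMap ℝ ℂ) = C (f.leadingCoeff : ℂ) *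
        (X ^ u * (A.map fun w => X + C w).prod) := by
  classical
  have hmapne : f.map (algebraMap ℝ ℂ) ≠ 0 := Polynomial.map_ne_zero hf0
  have heq := (IsAlgClosed.splits (f.map (algebraMap ℝ ℂ))).eq_prod_roots
  rw [leadingCoeff_map] at heq
  set R := (f.map (algebraMap ℝ ℂ)).roots with hR
  have hreal : ∀ w ∈ R, ∃ x : ℝ, x ≤ 0 ∧ w = (x : ℂ) := fun w hw =>
    hf w (isRoot_of_mem_roots hw)
  have hcard : Multiset.card R = f.natDegree := by
    rw [hR, splits_iff_card_roots.mp (IsAlgClosed.splits (f.map (algebraMap ℝ ℂ))), natDegree_map]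
  refine ⟨(R.filter (· ≠ 0)).map (fun w => -w), Multiset.card (R.filter (fun w => ¬ w ≠ 0)),
    ?_, ?_, ?_⟩
  · intro w hw
    obtain ⟨a, ha, rfl⟩ := Multiset.mem_map.mp hw
    have ha' := Multiset.mem_filter.mp ha
    obtain ⟨x, hx, rfl⟩ := hreal a ha'.1
    have hxne : x ≠ 0 := fun h => ha'.2 (by simp [h])
    have hx' : x < 0 := lt_of_le_of_ne hx hxne
    exact ⟨-x, by linarith, by push_cast; ring⟩
  · rw [Multiset.card_map]
    have := congrArg Multiset.card (Multiset.filter_add_not (· ≠ 0) R)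
    rw [Multiset.card_add] at this
    rw [this, hcard]
  · have h1 : ((R.filter (fun w => ¬ w ≠ 0)).map fun a => X - C a).prod
        = X ^ Multiset.card (R.filter fun w => ¬ w ≠ 0) := by
      have hc : (R.filter fun w => ¬ w ≠ 0).map (fun a => X - C a)
          = (R.filter fun w => ¬ w ≠ 0).map (fun _ => (X : ℂ[X])) := by
        apply Multiset.map_congr rfl
        intro a ha
        have h := (Multiset.mem_filter.mp ha).2
        push_neg at h
        simp [h]
      rw [hc, Multiset.map_const', Multiset.prod_replicate]
    have h2 : ((R.filter (· ≠ 0)).map (fun w => -w)).map (fun w => X + C w)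
        = (R.filter (· ≠ 0)).map (fun a => X - C a) := by
      rw [Multiset.map_map]
      apply Multiset.map_congr rfl
      intro a _
      simp [sub_eq_add_neg]
    have hbig : (R.map fun a => X - C a).prod
        = X ^ Multiset.card (R.filter fun w => ¬ w ≠ 0) *
          (((R.filter (· ≠ 0)).map (fun w => -w)).map fun w => X + C w).prod := by
      conv_lhs => rw [← Multiset.filter_add_not (· ≠ 0) R]
      rw [Multiset.map_add, Multiset.prod_add, h1, h2, mul_comm]
    rw [heq, hbig]
    norm_cast


lemma main (f g : Polynomial ℝ) (hf0 : 0 < f.leadingCoeff) (hg0 : 0 < g.leadingCoeff)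
    (hf : OnlyNonposZeros f) (hg : OnlyNonposZeros g)
    (hne : hadamard f g ≠ 0) (hnm : f.natDegree ≤ g.natDegree) :
    OnlyNonposZeros (hadamard f g) := by
  classical
  intro z hz
  by_contra hcon
  push_neg at hcon
  have hfne : f ≠ 0 := fun h => by rw [h] at hf0; simp at hf0
  have hgne : g ≠ 0 := fun h => by rw [h] at hg0; simp at hg0
  obtain ⟨A, u, hApos, hAcard, hAfac⟩ := exists_mult f hfne hf
  obtain ⟨B, v, hBpos, hBcard, hBfac⟩ := exists_mult g hgne hg
  have hz0 : z ≠ 0 := fun h => hcon 0 le_rfl (by simp [h])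
  -- the half-plane direction `c`
  obtain ⟨c, hc1, hc2⟩ : ∃ c : ℂ, c.re < 0 ∧ (c * (starRingEnd ℂ) z).re < 0 := by
    by_cases him : z.im = 0
    · have hzre : z = (z.re : ℂ) := Complex.ext rfl (by simp [him])
      have hpos : 0 < z.re := by
        by_contra hle
        push_neg at hle
        exact hcon z.re hle hzre
      refine ⟨-1, by norm_num, ?_⟩
      rw [neg_one_mul, Complex.neg_re, Complex.conj_re]
      linarith
    · refine ⟨⟨-1, (z.re - 1) / z.im⟩, by norm_num, ?_⟩
      rw [Complex.mul_re, Complex.conj_re, Complex.conj_im]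
      have hre : (⟨-1, (z.re - 1) / z.im⟩ : ℂ).re = -1 := rfl
      have him' : (⟨-1, (z.re - 1) / z.im⟩ : ℂ).im = (z.re - 1) / z.im := rfl
      rw [hre, him', mul_neg, div_mul_cancel₀ _ him]
      ring_nf
      norm_num
  have hαne : (f.leadingCoeff : ℂ) ≠ 0 := by
    simp only [ne_eq, Complex.ofReal_eq_zero]
    exact ne_of_gt hf0
  have hβne : (g.leadingCoeff : ℂ) ≠ 0 := by
    simp only [ne_eq, Complex.ofReal_eq_zero]
    exact ne_of_gt hg0
  set f1 : ℂ[X] := X ^ u * (A.map fun w => X + C w).prod with hf1def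
  set g1 : ℂ[X] := X ^ v * (B.map fun w => X + C w).prod with hg1def
  have hfc : ∀ k, ((f.coeff k : ℂ)) = (f.leadingCoeff : ℂ) * f1.coeff k := by
    intro k
    have h := congrArg (fun p => Polynomial.coeff p k) hAfac
    simpa [coeff_map, coeff_C_mul, Complex.coe_algebraMap] using h
  have hgc : ∀ k, ((g.coeff k : ℂ)) = (g.leadingCoeff : ℂ) * g1.coeff k := by
    intro k
    have h := congrArg (fun p => Polynomial.coeff p k) hBfac
    simpa [coeff_map, coeff_C_mul, Complex.coe_algebraMap] using h
  have hAmon : ((A.map fun w => X + C w).prod : ℂ[X]).Monic :=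
    monic_multiset_prod_of_monic _ _ (fun s _ => monic_X_add_C s)
  have hBmon : ((B.map fun w => X + C w).prod : ℂ[X]).Monic :=
    monic_multiset_prod_of_monic _ _ (fun s _ => monic_X_add_C s)
  have hf1deg : f1.natDegree = f.natDegree := by
    rw [hf1def, (monic_X_pow u).natDegree_mul hAmon, natDegree_X_pow,
      natDegree_prod_X_add_C]
    omega
  have hg1deg : g1.natDegree = g.natDegree := by
    rw [hg1def, (monic_X_pow v).natDegree_mul hBmon, natDegree_X_pow,
      natDegree_prod_X_add_C]
    omega
  -- v ≤ deg f, using that the Hadamard product is nonzero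
  have hvn : v ≤ f.natDegree := by
    by_contra hv
    push_neg at hv
    have hgc0 : ∀ i ≤ f.natDegree, g.coeff i = 0 := by
      intro i hi
      have h1 : g1.coeff i = 0 := by
        have hcomm : g1 = (B.map fun w => X + C w).prod * X ^ v := by
          rw [hg1def, mul_comm]
        rw [hcomm, coeff_mul_X_pow', if_neg (by omega)]
      have h2 := hgc i
      rw [h1, mul_zero] at h2
      exact_mod_cast h2
    apply hne
    unfold hadamard
    apply Finset.sum_eq_zero
    intro i hi
    have hin : i ≤ f.natDegree := by
      have h' := Finset.mem_range.mp hi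
      have h'' : min f.natDegree g.natDegree = f.natDegree := min_eq_left hnm
      omega
    rw [hgc0 i hin, mul_zero, map_zero, zero_mul]
  -- the root equation
  have hmin : min f.natDegree g.natDegree = f.natDegree := min_eq_left hnm
  have hsum0 : ∑ i ∈ Finset.range (f.natDegree + 1),
      (f.coeff i : ℂ) * (g.coeff i : ℂ) * z ^ i = 0 := by
    have h := hz
    rw [IsRoot.def] at h
    unfold hadamard at h
    rw [hmin, Polynomial.map_sum] at h
    simpa [eval_finset_sum, Polynomial.map_mul, Polynomial.map_C, Polynomial.map_pow,
      Polynomial.map_X, eval_mul, eval_pow, eval_C, eval_X,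
      Complex.coe_algebraMap, Complex.ofReal_mul] using h
  have hS : ∑ i ∈ Finset.range (f.natDegree + 1), f1.coeff i * g1.coeff i * z ^ i = 0 := by
    have hαβ : ((f.leadingCoeff : ℂ) * (g.leadingCoeff : ℂ)) ≠ 0 := mul_ne_zero hαne hβne
    apply mul_left_cancel₀ hαβ
    rw [mul_zero, Finset.mul_sum, ← hsum0]
    apply Finset.sum_congr rfl
    intro i _
    rw [hfc i, hgc i]
    ring
  -- the auxiliary polynomial F = P * Q and its m-th coefficient
  set P : ℂ[X] := (C z * X) ^ u * (A.map fun w => C z * X + C w).prod with hPdef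
  set Q : ℂ[X] := (B.map fun w => 1 + C w * X).prod with hQdef
  have hPc : ∀ k, P.coeff k = z ^ k * f1.coeff k := by
    intro k
    have h2 : P = C (z ^ u) * ((A.map fun w => C z * X + C w).prod * X ^ u) := by
      rw [hPdef, mul_pow, ← C_pow]; ring
    have h3 : f1 = (A.map fun w => X + C w).prod * X ^ u := by
      rw [hf1def, mul_comm]
    rw [h2, h3, coeff_C_mul, coeff_mul_X_pow', coeff_mul_X_pow']
    by_cases hk : u ≤ k
    · rw [if_pos hk, if_pos hk, coeff_scaled z A (k - u), ← mul_assoc, ← pow_add]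
      congr 2
      omega
    · rw [if_neg hk, if_neg hk, mul_zero, mul_zero]
  have hQc : ∀ j, j ≤ g.natDegree → Q.coeff j = g1.coeff (g.natDegree - j) := by
    intro j hj
    have hvB : v + Multiset.card B = g.natDegree := by omega
    have h := coeff_rev B v j (by omega)
    rw [hvB] at h
    rw [hQdef, h, hg1def]
  set F : ℂ[X] := P * Q with hFdef
  have hFm0 : F.coeff g.natDegree = 0 := by
    rw [hFdef, coeff_mul, Finset.Nat.sum_antidiagonal_eq_sum_range_succ_mk]
    have hstep : ∀ k ∈ Finset.range (g.natDegree + 1),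
        P.coeff k * Q.coeff (g.natDegree - k)
          = f1.coeff k * g1.coeff k * z ^ k := by
      intro k hk
      have hkm : k ≤ g.natDegree := by
        have := Finset.mem_range.mp hk
        omega
      rw [hPc k, hQc (g.natDegree - k) (by omega), Nat.sub_sub_self hkm]
      ring
    rw [Finset.sum_congr rfl hstep]
    rw [← Finset.sum_subset
      (Finset.range_subset_range.mpr (by omega : f.natDegree + 1 ≤ g.natDegree + 1))
      (fun i _ hni => by
        have hlt : f1.natDegree < i := by
          simp only [Finset.mem_range] at hni
          omega
        rw [coeff_eq_zero_of_natDegree_lt hlt, zero_mul, zero_mul])]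
    exact hS
  set G : ℂ[X] := (A.map fun w => C z * X + C w).prod * Q with hGdef
  have hF2 : F.coeff g.natDegree = z ^ u * G.coeff (g.natDegree - u) := by
    have h1 : F = C (z ^ u) * (G * X ^ u) := by
      rw [hFdef, hGdef, hPdef, mul_pow, ← C_pow]; ring
    rw [h1, coeff_C_mul, coeff_mul_X_pow', if_pos (by omega : u ≤ g.natDegree)]
  have hG0 : G.coeff (g.natDegree - u) = 0 := by
    have h := hF2
    rw [hFm0] at h
    exact (mul_eq_zero.mp h.symm).resolve_left (pow_ne_zero u hz0)
  -- the factored form of G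
  have hBprodne : B.prod ≠ 0 := Multiset.prod_ne_zero (fun h0 => by
    obtain ⟨r, hr, hre⟩ := hBpos 0 h0
    have : r = 0 := by exact_mod_cast hre.symm
    linarith)
  set R : Multiset ℂ := A.map (fun w => -w / z) + B.map (fun w => -w⁻¹) with hRdef
  have hGfac : G = C (z ^ Multiset.card A * B.prod) * (R.map fun ρ => X - C ρ).prod := by
    have hcongA : A.map (fun w => C z * X + C w)
        = A.map (fun w => C z * (X - C (-w / z))) := by
      apply Multiset.map_congr rfl
      intro w _
      have hzw : z * (-w / z) = -w := by
        field_simp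
      rw [mul_sub, ← C_mul, hzw, map_neg, sub_neg_eq_add]
    have h1 : (A.map fun w => C z * X + C w).prod
        = C (z ^ Multiset.card A) * ((A.map (fun w => -w / z)).map fun ρ => X - C ρ).prod := by
      rw [hcongA, Multiset.prod_map_mul, Multiset.map_const', Multiset.prod_replicate,
        Multiset.map_map, ← C_pow]
      simp [Function.comp]
    have hcongB : B.map (fun w => 1 + C w * X)
        = B.map (fun w => C w * (X - C (-w⁻¹))) := by
      apply Multiset.map_congr rfl
      intro w hw
      obtain ⟨r, hr, rfl⟩ := hBpos w hw
      have hwne : ((r : ℝ) : ℂ) ≠ 0 := by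
        simp only [ne_eq, Complex.ofReal_eq_zero]
        linarith
      have hzw : (r : ℂ) * (-(r : ℂ)⁻¹) = -1 := by field_simp
      rw [mul_sub, ← C_mul, hzw, map_neg, sub_neg_eq_add, map_one, add_comm]
    have h2 : Q = C B.prod * ((B.map (fun w => -w⁻¹)).map fun ρ => X - C ρ).prod := by
      rw [hQdef, hcongB, Multiset.prod_map_mul, Multiset.map_map]
      congr 1
      exact (map_multiset_prod (C : ℂ →+* ℂ[X]) B).symm
    rw [hGdef, h1, h2, hRdef, Multiset.map_add, Multiset.prod_add, C_mul]
    ring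
  have hγne : z ^ Multiset.card A * B.prod ≠ 0 :=
    mul_ne_zero (pow_ne_zero _ hz0) hBprodne
  have hGne : G ≠ 0 := by
    rw [hGfac]
    exact mul_ne_zero (by rwa [ne_eq, C_eq_zero])
      (monic_multiset_prod_of_monic _ _ (fun ρ _ => monic_X_sub_C ρ)).ne_zero
  have hGdeg : G.natDegree = Multiset.card A + Multiset.card B := by
    rw [hGfac, natDegree_C_mul hγne, natDegree_multiset_prod_X_sub_C_eq_card, hRdef,
      Multiset.card_add, Multiset.card_map, Multiset.card_map]
  -- roots of G lie in the half-plane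
  have hczinv : (c * z⁻¹).re < 0 := by
    have h1 : c * z⁻¹ = (((Complex.normSq z)⁻¹ : ℝ) : ℂ) * (c * (starRingEnd ℂ) z) := by
      rw [Complex.inv_def, Complex.ofReal_inv]
      ring
    rw [h1, Complex.re_ofReal_mul]
    exact mul_neg_of_pos_of_neg (inv_pos.mpr (Complex.normSq_pos.mpr hz0)) hc2
  have hRH : ∀ ρ ∈ R, 0 < (c * ρ).re := by
    intro ρ hρ
    rcases Multiset.mem_add.mp hρ with hmem | hmem
    · obtain ⟨w, hw, rfl⟩ := Multiset.mem_map.mp hmem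
      obtain ⟨r, hr, rfl⟩ := hApos w hw
      have hform : c * (-(r : ℂ) / z) = ((-r : ℝ) : ℂ) * (c * z⁻¹) := by
        push_cast
        ring
      rw [hform, Complex.re_ofReal_mul]
      exact mul_pos_of_neg_of_neg (by linarith) hczinv
    · obtain ⟨w, hw, rfl⟩ := Multiset.mem_map.mp hmem
      obtain ⟨r, hr, rfl⟩ := hBpos w hw
      have hform : c * (-((r : ℂ))⁻¹) = ((-r⁻¹ : ℝ) : ℂ) * c := by
        push_cast
        ring
      rw [hform, Complex.re_ofReal_mul]
      have : (0 : ℝ) < r⁻¹ := inv_pos.mpr hr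
      exact mul_pos_of_neg_of_neg (by linarith) hc1
  have hGroots : ∀ w, G.IsRoot w → 0 < (c * w).re := by
    intro w hw
    rw [IsRoot.def, hGfac, eval_mul, eval_C] at hw
    have h2 : eval w (R.map fun ρ => X - C ρ).prod = 0 :=
      (mul_eq_zero.mp hw).resolve_left hγne
    rw [eval_multiset_prod, Multiset.map_map] at h2
    obtain ⟨ρ, hρmem, hρeq⟩ := Multiset.mem_map.mp (Multiset.prod_eq_zero_iff.mp h2)
    simp only [Function.comp_apply, eval_sub, eval_X, eval_C] at hρeq
    have hwρ : w = ρ := by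
      have := sub_eq_zero.mp hρeq
      exact this
    rw [hwρ]
    exact hRH ρ hρmem
  -- conclude via iterated Gauss–Lucas
  have hKK : g.natDegree - u ≤ G.natDegree := by
    rw [hGdeg]
    omega
  obtain ⟨hne', _, hroots'⟩ := gl_iter c G hGne hGroots (g.natDegree - u) hKK
  have hzero : (derivative^[g.natDegree - u] G).coeff 0 = 0 := by
    rw [coeff_iterate_derivative, zero_add, hG0, smul_zero]
  have hroot0 : (derivative^[g.natDegree - u] G).IsRoot 0 := by
    rw [IsRoot.def, ← coeff_zero_eq_eval_zero]
    exact hzero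
  have hfin := hroots' 0 hroot0
  simp at hfin

end MaloAux

theorem hadamard_only_nonpos_zeros (f g : Polynomial ℝ)
    (hf0 : 0 < f.leadingCoeff) (hg0 : 0 < g.leadingCoeff)
    (hf : OnlyNonposZeros f) (hg : OnlyNonposZeros g)
    (hne : hadamard f g ≠ 0) :
    OnlyNonposZeros (hadamard f g) := by
  rcases le_total f.natDegree g.natDegree with h | h
  · exact MaloAux.main f g hf0 hg0 hf hg hne h
  · have h2 := MaloAux.main g f hg0 hf0 hg hf
      (by rw [MaloAux.hadamard_comm g f]; exact hne) h
    rw [MaloAux.hadamard_comm f g]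
    exact h2
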